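/- Counting confluence: if a relation → satisfies the diamond property, and a reduces to b in m steps and to c in n steps, then there exists d such that b reduces to d in at most n steps and c reduces to d in at most m steps. -/
import Mathlib


/-- `StepsN r n a b` : `a` reduces to `b` in exactly `n` steps of `r`. -/
def StepsN {α : Type*} (r : α → α → Prop) : ℕ → α → α → Prop
  | 0, a, b => a = b
  | n + 1, a, b => ∃ c, r a c ∧ StepsN r n c b

lemma strip {α : Type*} (r : α → α → Prop)
    (hdiam : ∀ a b c : α, r a b → r a c →
      ∃ d, (r b d ∨ b = d) ∧ (r c d ∨ c = d)) :
    ∀ (n : ℕ) (a b c : α), r a b → StepsN r n a c →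
      ∃ d j, j ≤ n ∧ StepsN r j b d ∧ (r c d ∨ c = d) := by
  intro n
  induction n with
  | zero =>
    intro a b c hab hac
    cases hac
    exact ⟨b, 0, le_refl _, rfl, Or.inl hab⟩
  | succ n ih =>
    intro a b c hab hac
    obtain ⟨c₁, hac₁, hc₁c⟩ := hac
    obtain ⟨e, hbe, hce⟩ := hdiam a b c₁ hab hac₁
    cases hce with
    | inl hc₁e =>
      obtain ⟨d, j, hj, hed, hcd⟩ := ih c₁ e c hc₁e hc₁c
      cases hbe with
      | inl hbe => exact ⟨d, j + 1, Nat.succ_le_succ hj, ⟨e, hbe, hed⟩, hcd⟩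
      | inr hbe => exact ⟨d, j, hj.trans (Nat.le_succ n), hbe ▸ hed, hcd⟩
    | inr hc₁e =>
      subst hc₁e
      cases hbe with
      | inl hbe => exact ⟨c, n + 1, le_refl _, ⟨c₁, hbe, hc₁c⟩, Or.inr rfl⟩
      | inr hbe => exact ⟨c, n, Nat.le_succ n, hbe ▸ hc₁c, Or.inr rfl⟩

/-- Counting confluence: with the diamond property, if `a` reduces to `b` in `m` steps and
to `c` in `n` steps, there is `d` with `b` reducing to `d` in at most `n` steps and `c`
reducing to `d` in at most `m` steps. -/
theorem counting_confluence {α : Type*} (r : α → α → Prop)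
    (hdiam : ∀ a b c : α, r a b → r a c →
      ∃ d, (r b d ∨ b = d) ∧ (r c d ∨ c = d)) :
    ∀ (m n : ℕ) (a b c : α), StepsN r m a b → StepsN r n a c →
      ∃ d j k, j ≤ n ∧ k ≤ m ∧ StepsN r j b d ∧ StepsN r k c d := by
  intro m
  induction m with
  | zero =>
    intro n a b c hab hac
    cases hab
    exact ⟨c, n, 0, le_refl _, le_refl _, hac, rfl⟩
  | succ m ih =>
    intro n a b c hab hac
    obtain ⟨b₁, hab₁, hb₁b⟩ := hab
    obtain ⟨e, j, hj, hb₁e, hce⟩ := strip r hdiam n a b₁ c hab₁ hac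
    obtain ⟨d, j', k', hj', hk', hbd, hed⟩ := ih j b₁ b e hb₁b hb₁e
    cases hce with
    | inl hce =>
      exact ⟨d, j', k' + 1, hj'.trans hj, Nat.succ_le_succ hk', hbd, ⟨e, hce, hed⟩⟩
    | inr hce =>
      exact ⟨d, j', k', hj'.trans hj, hk'.trans (Nat.le_succ m), hbd, hce ▸ hed⟩
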